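/- Let p be a prime and a ∈ F_p nonzero. The Dickson polynomial D_n(x, a) induces a bijection on F_{p^k} for infinitely many k if and only if gcd(n, p² - 1) = 1. -/

import Mathlib

open Polynomial

theorem aux_dickson_eval_add {R : Type*} [CommRing R] (a : R) (x y : R) (h : x * y = a) :
    ∀ n, (dickson 1 a n).eval (x + y) = x ^ n + y ^ n
  | 0 => by simp [dickson_zero]; norm_num
  | 1 => by simp
  | n + 2 => by
    simp only [dickson_add_two, eval_sub, eval_mul, eval_X, eval_C,
      aux_dickson_eval_add a x y h (n + 1), aux_dickson_eval_add a x y h n]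
    rw [← h]; ring

theorem aux_dickson_injective (K : Type*) [Field K] [Fintype K] (a : K) (ha : a ≠ 0) (n : ℕ)
    (hgcd : Nat.gcd n (Fintype.card K ^ 2 - 1) = 1) :
    Function.Injective (fun c : K => (dickson 1 a n).eval c) := by
  classical
  set q := Fintype.card K with hq
  have hq1 : 1 < q := Fintype.one_lt_card
  set p := ringChar K with hp
  haveI hfact : Fact p.Prime := ⟨CharP.char_is_prime K p⟩
  obtain ⟨k, -, hqpk0⟩ := FiniteField.card K p
  have hqpk : q = p ^ (k : ℕ) := by rw [hq]; exact hqpk0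
  let Ω := AlgebraicClosure K
  haveI : CharP Ω p := charP_of_injective_algebraMap (algebraMap K Ω).injective p
  set A : Ω := algebraMap K Ω a with hA
  have hA0 : A ≠ 0 := fun h => ha ((algebraMap K Ω).injective (by simpa [hA] using h))
  have helper : ∀ d : K, ∃ y : Ω, y ≠ 0 ∧ y ^ (q ^ 2 - 1) = 1 ∧
      algebraMap K Ω d = y + A / y := by
    intro d
    set c : Ω := algebraMap K Ω d with hc
    have hcq : c ^ q = c := by rw [hc, ← map_pow, FiniteField.pow_card]
    have hAq : A ^ q = A := by rw [hA, ← map_pow, FiniteField.pow_card]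
    have hdeg : (X ^ 2 - C c * X + C A : Polynomial Ω).degree ≠ 0 := by
      have : (X ^ 2 - C c * X + C A : Polynomial Ω).degree = 2 := by compute_degree!
      rw [this]; decide
    obtain ⟨y, hy⟩ := IsAlgClosed.exists_root (X ^ 2 - C c * X + C A : Polynomial Ω) hdeg
    have hy' : y ^ 2 - c * y + A = 0 := by simpa [IsRoot] using hy
    have hy0 : y ≠ 0 := by
      rintro rfl; apply hA0; simpa using hy'
    have hz : (y ^ q) ^ 2 - c * y ^ q + A = 0 := by
      have h0 : (y ^ 2 - c * y + A) ^ q = 0 := by rw [hy', zero_pow (by omega)]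
      rw [hqpk, add_pow_char_pow, sub_pow_char_pow, mul_pow, ← hqpk, hcq, hAq] at h0
      calc (y ^ q) ^ 2 - c * y ^ q + A = (y ^ 2) ^ q - c * y ^ q + A := by
            rw [← pow_mul, ← pow_mul, mul_comm]
        _ = 0 := h0
    have hfac : (y ^ q - y) * (y ^ q + y - c) = 0 := by linear_combination hz - hy'
    have hyq2 : y ^ q ^ 2 = y := by
      have hrw : y ^ q ^ 2 = (y ^ q) ^ q := by rw [← pow_mul, pow_two]
      rcases mul_eq_zero.1 hfac with h | h
      · have h1 : y ^ q = y := by linear_combination h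
        rw [hrw, h1, h1]
      · have h1 : y ^ q = c - y := by linear_combination h
        have h2 : (c - y) ^ q = c ^ q - y ^ q := by
          rw [hqpk, sub_pow_char_pow]
        rw [hrw, h1, h2, hcq, h1]; ring
    refine ⟨y, hy0, ?_, ?_⟩
    · have hstep : y ^ (q ^ 2 - 1) * y = 1 * y := by
        rw [one_mul, ← pow_succ, Nat.sub_add_cancel (Nat.one_le_pow _ _ (by omega)), hyq2]
      exact mul_right_cancel₀ hy0 hstep
    · rw [hc] at hy' ⊢
      rw [← sub_eq_iff_eq_add', eq_div_iff hy0]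
      linear_combination -hy'
  intro d₁ d₂ hd
  simp only at hd
  obtain ⟨y₁, hy₁0, hy₁u, hc₁⟩ := helper d₁
  obtain ⟨y₂, hy₂0, hy₂u, hc₂⟩ := helper d₂
  have hmapeval : ∀ d : K, algebraMap K Ω ((dickson 1 a n).eval d)
      = (dickson 1 A n).eval (algebraMap K Ω d) := by
    intro d
    rw [hA, ← map_dickson, eval_map, eval₂_at_apply]
  have hΩ : (dickson 1 A n).eval (algebraMap K Ω d₁) = (dickson 1 A n).eval (algebraMap K Ω d₂) := by
    rw [← hmapeval, ← hmapeval, hd]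
  have he₁ : (dickson 1 A n).eval (algebraMap K Ω d₁) = y₁ ^ n + (A / y₁) ^ n := by
    rw [hc₁]; exact aux_dickson_eval_add A y₁ (A / y₁) (by rw [mul_comm]; exact div_mul_cancel₀ _ hy₁0) n
  have he₂ : (dickson 1 A n).eval (algebraMap K Ω d₂) = y₂ ^ n + (A / y₂) ^ n := by
    rw [hc₂]; exact aux_dickson_eval_add A y₂ (A / y₂) (by rw [mul_comm]; exact div_mul_cancel₀ _ hy₂0) n
  have heq : y₁ ^ n + (A / y₁) ^ n = y₂ ^ n + (A / y₂) ^ n := by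
    rw [← he₁, ← he₂, hΩ]
  have hy₁n : y₁ ^ n ≠ 0 := pow_ne_zero _ hy₁0
  have hy₂n : y₂ ^ n ≠ 0 := pow_ne_zero _ hy₂0
  have hkey : (y₁ ^ n - y₂ ^ n) * (y₁ ^ n * y₂ ^ n - A ^ n) = 0 := by
    rw [div_pow, div_pow] at heq
    rw [add_div' _ _ _ hy₁n, add_div' _ _ _ hy₂n, div_eq_div_iff hy₁n hy₂n] at heq
    linear_combination heq
  have hord : ∀ u : Ω, u ^ n = 1 → u ^ (q ^ 2 - 1) = 1 → u = 1 := by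
    intro u h1 h2
    have hdvd : orderOf u ∣ Nat.gcd n (q ^ 2 - 1) :=
      Nat.dvd_gcd (orderOf_dvd_of_pow_eq_one h1) (orderOf_dvd_of_pow_eq_one h2)
    rw [hgcd, Nat.dvd_one] at hdvd
    exact orderOf_eq_one_iff.1 hdvd
  have hAu : A ^ (q ^ 2 - 1) = 1 := by
    have hAq : A ^ q = A := by rw [hA, ← map_pow, FiniteField.pow_card]
    have hAq2 : A ^ q ^ 2 = A := by rw [pow_two, mul_comm, pow_mul, hAq, hAq]
    have hstep : A ^ (q ^ 2 - 1) * A = 1 * A := by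
      rw [one_mul, ← pow_succ, Nat.sub_add_cancel (Nat.one_le_pow _ _ (by omega)), hAq2]
    exact mul_right_cancel₀ hA0 hstep
  apply (algebraMap K Ω).injective
  rcases mul_eq_zero.1 hkey with h | h
  · have h' : y₁ ^ n = y₂ ^ n := by linear_combination h
    have hu : (y₁ * y₂⁻¹) ^ n = 1 := by
      rw [mul_pow, inv_pow, h', mul_inv_cancel₀ hy₂n]
    have hu2 : (y₁ * y₂⁻¹) ^ (q ^ 2 - 1) = 1 := by
      rw [mul_pow, inv_pow, hy₁u, hy₂u, inv_one, mul_one]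
    have h12 : y₁ = y₂ := (mul_inv_eq_one₀ hy₂0).1 (hord _ hu hu2)
    rw [hc₁, hc₂, h12]
  · have h' : y₁ ^ n * y₂ ^ n = A ^ n := by linear_combination h
    have hAn : A ^ n ≠ 0 := pow_ne_zero _ hA0
    have hu : (y₁ * y₂ * A⁻¹) ^ n = 1 := by
      rw [mul_pow, mul_pow, inv_pow, h', mul_inv_cancel₀ hAn]
    have hu2 : (y₁ * y₂ * A⁻¹) ^ (q ^ 2 - 1) = 1 := by
      rw [mul_pow, mul_pow, inv_pow, hy₁u, hy₂u, hAu, inv_one, mul_one, mul_one]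
    have h12 : y₁ * y₂ = A := (mul_inv_eq_one₀ hA0).1 (hord _ hu hu2)
    rw [hc₁, hc₂]
    rw [add_div' _ _ _ hy₁0, add_div' _ _ _ hy₂0, div_eq_div_iff hy₁0 hy₂0]
    linear_combination (y₁ - y₂) * h12


theorem aux_fixed_mem_range {K L : Type*} [Field K] [Fintype K] [Field L] [Algebra K L]
    (x : L) (hx : x ^ Fintype.card K = x) :
    ∃ d : K, algebraMap K L d = x := by
  classical
  set q := Fintype.card K with hq
  have hq1 : 1 < q := Fintype.one_lt_card
  set f : L[X] := X ^ q - X with hf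
  have hf0 : f ≠ 0 := FiniteField.X_pow_card_sub_X_ne_zero L hq1
  have hdeg : f.natDegree = q := FiniteField.X_pow_card_sub_X_natDegree_eq L hq1
  have hroots : f.roots.card ≤ q := hdeg ▸ f.card_roots'
  set R : Finset L := Finset.univ.image (algebraMap K L) with hR
  have hRcard : R.card = q := by
    rw [hR, Finset.card_image_of_injective _ (algebraMap K L).injective, Finset.card_univ]
  have hRsub : R ⊆ f.roots.toFinset := by
    intro r hr
    rw [hR, Finset.mem_image] at hr
    obtain ⟨d, -, rfl⟩ := hr
    rw [Multiset.mem_toFinset, mem_roots hf0]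
    simp [hf, IsRoot, ← map_pow, FiniteField.pow_card]
    rw [FiniteField.pow_card]; ring
  have hcard2 : f.roots.toFinset.card ≤ q := le_trans (Multiset.toFinset_card_le _) hroots
  have hEq : R = f.roots.toFinset :=
    Finset.eq_of_subset_of_card_le hRsub (by omega)
  have hxmem : x ∈ f.roots.toFinset := by
    rw [Multiset.mem_toFinset, mem_roots hf0]
    simp [hf, IsRoot, hx]
  rw [← hEq, hR, Finset.mem_image] at hxmem
  obtain ⟨d, -, hd⟩ := hxmem
  exact ⟨d, hd⟩

theorem aux_dickson_not_injective (K : Type*) [Field K] [Fintype K] (a : K) (ha : a ≠ 0)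
    (n ℓ : ℕ) (hℓ : ℓ.Prime) (hℓn : ℓ ∣ n) (hℓq : ℓ ∣ Fintype.card K ^ 2 - 1) :
    ¬ Function.Injective (fun c : K => (dickson 1 a n).eval c) := by
  classical
  intro hinj
  haveI : Fact ℓ.Prime := ⟨hℓ⟩
  set q := Fintype.card K with hq
  have hq1 : 1 < q := Fintype.one_lt_card
  have hfactor : q ^ 2 - 1 = (q - 1) * (q + 1) := by
    obtain ⟨m, hm⟩ : ∃ m, q = m + 1 := ⟨q - 1, by omega⟩
    rw [hm]
    have h : (m + 1) ^ 2 = m * (m + 1 + 1) + 1 := by ring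
    rw [h, Nat.add_sub_cancel, Nat.add_sub_cancel]
  have hcase : ℓ ∣ q + 1 ∨ (ℓ ∣ q - 1 ∧ ℓ ≠ 2) := by
    rw [hfactor] at hℓq
    rcases (Nat.Prime.dvd_mul hℓ).1 hℓq with h | h
    · by_cases h2 : ℓ = 2
      · subst h2
        left
        omega
      · exact Or.inr ⟨h, h2⟩
    · exact Or.inl h
  rcases hcase with hdvd | ⟨hdvd, hne2⟩
  · -- case ℓ ∣ q + 1 : work in the algebraic closure
    set p := ringChar K with hp
    haveI hfact : Fact p.Prime := ⟨CharP.char_is_prime K p⟩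
    obtain ⟨k, -, hqpk0⟩ := FiniteField.card K p
    have hqpk : q = p ^ (k : ℕ) := by rw [hq]; exact hqpk0
    set Ω := AlgebraicClosure K
    haveI : CharP Ω p := charP_of_injective_algebraMap (algebraMap K Ω).injective p
    have hpq : p ∣ q := hqpk ▸ dvd_pow_self p k.pos.ne'
    have hℓp : ℓ ≠ p := by
      rintro rfl
      have h1 := (Nat.dvd_add_right hpq).1 hdvd
      rw [Nat.dvd_one] at h1
      have := hℓ.two_le
      omega
    have hℓΩ : NeZero ((ℓ : ℕ) : Ω) := by
      refine ⟨fun h => ?_⟩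
      rw [CharP.cast_eq_zero_iff Ω p ℓ] at h
      exact hℓp ((Nat.prime_dvd_prime_iff_eq hfact.out hℓ).1 h).symm
    obtain ⟨ζ, hζ⟩ := HasEnoughRootsOfUnity.exists_primitiveRoot Ω ℓ
    have hζℓ : ζ ^ ℓ = 1 := hζ.pow_eq_one
    have hζ1 : ζ ≠ 1 := hζ.ne_one hℓ.one_lt
    have hζ0 : ζ ≠ 0 := fun h => one_ne_zero (α := Ω) (by rw [← hζℓ, h, zero_pow hℓ.ne_zero])
    have hζq1 : ζ ^ (q + 1) = 1 := by
      obtain ⟨m, hm⟩ := hdvd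
      rw [hm, pow_mul, hζℓ, one_pow]
    have hζn : ζ ^ n = 1 := by
      obtain ⟨m, rfl⟩ := hℓn
      rw [pow_mul, hζℓ, one_pow]
    set A : Ω := algebraMap K Ω a with hA
    have hA0 : A ≠ 0 := fun h => ha ((algebraMap K Ω).injective (by simpa [hA] using h))
    have hAq : A ^ q = A := by rw [hA, ← map_pow, FiniteField.pow_card]
    -- roots of X^(q+1) - A
    set f : Polynomial Ω := X ^ (q + 1) - C A with hf
    have hf0 : f ≠ 0 := X_pow_sub_C_ne_zero (by omega) A
    have hfdeg : f.natDegree = q + 1 := natDegree_X_pow_sub_C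
    have hsep : f.Separable := by
      refine separable_X_pow_sub_C' p (q + 1) A ?_ hA0
      intro hpdvd
      have h1 : p ∣ 1 := (Nat.dvd_add_right hpq).1 hpdvd
      rw [Nat.dvd_one] at h1
      have := hfact.out.two_le
      omega
    have hnodup : f.roots.Nodup := Polynomial.nodup_roots hsep
    have hcardroots : Multiset.card f.roots = q + 1 := by
      rw [← hfdeg]
      exact (splits_iff_card_roots.1 (IsAlgClosed.splits f))
    set S : Finset Ω := f.roots.toFinset with hS
    have hScard : S.card = q + 1 := by
      rw [hS, Multiset.toFinset_card_of_nodup hnodup, hcardroots]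
    -- pick a good root
    have hex : ∃ y ∈ S, y ^ 2 ≠ A * ζ⁻¹ := by
      by_contra hall
      push_neg at hall
      have hsub : S ⊆ (X ^ 2 - C (A * ζ⁻¹) : Polynomial Ω).roots.toFinset := by
        intro y hy
        rw [Multiset.mem_toFinset, mem_roots (X_pow_sub_C_ne_zero (by omega) _)]
        simp [IsRoot, hall y hy]
      have h2 : ((X ^ 2 - C (A * ζ⁻¹) : Polynomial Ω).roots.toFinset).card ≤ 2 := by
        refine le_trans (Multiset.toFinset_card_le _) (le_trans (card_roots' _) ?_)
        rw [natDegree_X_pow_sub_C]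
      have := Finset.card_le_card hsub
      omega
    obtain ⟨y₁, hy₁S, hy₁sq⟩ := hex
    have hy₁root : y₁ ^ (q + 1) = A := by
      rw [hS, Multiset.mem_toFinset, mem_roots hf0] at hy₁S
      have := hy₁S
      simp only [hf, IsRoot, eval_sub, eval_pow, eval_X, eval_C, sub_eq_zero] at this
      exact this
    have hy₁0 : y₁ ≠ 0 := by
      rintro rfl
      rw [zero_pow (by omega)] at hy₁root
      exact hA0 hy₁root.symm
    set y₂ : Ω := ζ * y₁ with hy₂
    have hy₂0 : y₂ ≠ 0 := mul_ne_zero hζ0 hy₁0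
    have hy₂root : y₂ ^ (q + 1) = A := by
      rw [hy₂, mul_pow, hζq1, one_mul, hy₁root]
    -- both traces are fixed by Frobenius
    have hfix : ∀ y : Ω, y ≠ 0 → y ^ (q + 1) = A → (y + A / y) ^ q = y + A / y := by
      intro y hy0 hyroot
      have hyq : y ^ q = A / y := by
        rw [eq_div_iff hy0, ← pow_succ, hyroot]
      have hAdiv : A / (A / y) = y := by
        exact div_div_cancel₀ hA0
      rw [hqpk, add_pow_char_pow, div_pow, ← hqpk, hyq, hAq, hAdiv, add_comm]
    obtain ⟨d₁, hd₁⟩ := aux_fixed_mem_range (K := K) (y₁ + A / y₁) (hfix y₁ hy₁0 hy₁root)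
    obtain ⟨d₂, hd₂⟩ := aux_fixed_mem_range (K := K) (y₂ + A / y₂) (hfix y₂ hy₂0 hy₂root)
    have hmapeval : ∀ d : K, algebraMap K Ω ((dickson 1 a n).eval d)
        = (dickson 1 A n).eval (algebraMap K Ω d) := by
      intro d
      rw [hA, ← map_dickson, eval_map, eval₂_at_apply]
    have hne : d₁ ≠ d₂ := by
      intro h
      rw [h, hd₂] at hd₁
      apply hy₁sq
      have h0' : (ζ - 1) * (A - ζ * y₁ ^ 2) * y₁ = 0 := by
        rw [hy₂] at hd₁
        rw [add_div' _ _ _ hy₁0, add_div' _ _ _ (mul_ne_zero hζ0 hy₁0),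
          div_eq_div_iff (mul_ne_zero hζ0 hy₁0) hy₁0] at hd₁
        linear_combination -hd₁
      have h0 : (ζ - 1) * (A - ζ * y₁ ^ 2) = 0 := by
        rcases mul_eq_zero.1 h0' with h1 | h1
        · exact h1
        · exact absurd h1 hy₁0
      rcases mul_eq_zero.1 h0 with h1 | h1
      · exact absurd (by linear_combination h1) hζ1
      · have hA2 : A = ζ * y₁ ^ 2 := by linear_combination h1
        rw [hA2, mul_comm ζ (y₁ ^ 2), mul_assoc, mul_inv_cancel₀ hζ0, mul_one]
    have heval : (dickson 1 a n).eval d₁ = (dickson 1 a n).eval d₂ := by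
      apply (algebraMap K Ω).injective
      rw [hmapeval, hmapeval, hd₁, hd₂,
        aux_dickson_eval_add A y₁ (A / y₁) (by rw [mul_comm]; exact div_mul_cancel₀ _ hy₁0) n,
        aux_dickson_eval_add A y₂ (A / y₂) (by rw [mul_comm]; exact div_mul_cancel₀ _ hy₂0) n,
        hy₂, mul_pow, hζn, one_mul, div_pow, div_pow, mul_pow, hζn, one_mul]
    exact hne (hinj heval)
  · -- case ℓ ∣ q - 1, ℓ odd : work inside K
    have hℓ3 : 3 ≤ ℓ := by
      have := hℓ.two_le
      omega
    have hq4 : 4 ≤ q := by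
      have : ℓ ≤ q - 1 := Nat.le_of_dvd (by omega) hdvd
      omega
    have hcard : ℓ ∣ Fintype.card Kˣ := by
      rw [Fintype.card_units]
      exact hdvd
    obtain ⟨ζu, hζu⟩ := exists_prime_orderOf_dvd_card ℓ hcard
    set ζ : K := (ζu : K) with hζdef
    have hζℓ : ζ ^ ℓ = 1 := by
      rw [hζdef, ← Units.val_pow_eq_pow_val, ← hζu, pow_orderOf_eq_one, Units.val_one]
    have hζ1 : ζ ≠ 1 := by
      intro h
      have : ζu = 1 := Units.ext (by simpa [hζdef] using h)
      rw [this, orderOf_one] at hζu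
      omega
    have hζ0 : ζ ≠ 0 := Units.ne_zero ζu
    have hζn : ζ ^ n = 1 := by
      obtain ⟨m, rfl⟩ := hℓn
      rw [pow_mul, hζℓ, one_pow]
    -- pick y₁ avoiding the bad set
    set bad : Finset K := insert 0 ((X ^ 2 - C (a * ζ⁻¹) : Polynomial K).roots.toFinset)
      with hbad
    have hbadcard : bad.card ≤ 3 := by
      refine le_trans (Finset.card_insert_le _ _) ?_
      have h2 : ((X ^ 2 - C (a * ζ⁻¹) : Polynomial K).roots.toFinset).card ≤ 2 := by
        refine le_trans (Multiset.toFinset_card_le _) (le_trans (card_roots' _) ?_)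
        rw [natDegree_X_pow_sub_C]
      omega
    have hcompl : (badᶜ : Finset K).Nonempty := by
      rw [← Finset.card_pos, Finset.card_compl]
      omega
    obtain ⟨y₁, hy₁mem⟩ := hcompl
    rw [Finset.mem_compl, hbad, Finset.mem_insert] at hy₁mem
    push_neg at hy₁mem
    obtain ⟨hy₁0, hy₁nr⟩ := hy₁mem
    have hy₁sq : y₁ ^ 2 ≠ a * ζ⁻¹ := by
      intro h
      apply hy₁nr
      rw [Multiset.mem_toFinset, mem_roots (X_pow_sub_C_ne_zero (by omega) _)]
      simp [IsRoot, h]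
    set d₁ : K := y₁ + a / y₁ with hd₁
    set d₂ : K := ζ * y₁ + a / (ζ * y₁) with hd₂
    have hne : d₁ ≠ d₂ := by
      intro h
      apply hy₁sq
      rw [hd₁, hd₂] at h
      have h0' : (ζ - 1) * (a - ζ * y₁ ^ 2) * y₁ = 0 := by
        field_simp at h
        linear_combination y₁ * h
      have h0 : (ζ - 1) * (a - ζ * y₁ ^ 2) = 0 := by
        rcases mul_eq_zero.1 h0' with h1 | h1
        · exact h1
        · exact absurd h1 hy₁0
      rcases mul_eq_zero.1 h0 with h1 | h1
      · exact absurd (by linear_combination h1) hζ1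
      · have hA2 : a = ζ * y₁ ^ 2 := by linear_combination h1
        rw [hA2, mul_comm ζ (y₁ ^ 2), mul_assoc, mul_inv_cancel₀ hζ0, mul_one]
    have heval : (dickson 1 a n).eval d₁ = (dickson 1 a n).eval d₂ := by
      rw [hd₁, hd₂,
        aux_dickson_eval_add a y₁ (a / y₁) (by field_simp) n,
        aux_dickson_eval_add a (ζ * y₁) (a / (ζ * y₁)) (by field_simp) n,
        mul_pow, hζn, one_mul, div_pow, div_pow, mul_pow, hζn, one_mul]
    exact hne (hinj heval)


theorem aux_gcd_pow (p n k : ℕ) (hp : p.Prime) (hgcd : Nat.Coprime n (p ^ 2 - 1))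
    (hk : k.Prime) (hnk : n < k) : Nat.Coprime n ((p ^ k) ^ 2 - 1) := by
  by_contra h
  obtain ⟨ℓ, hℓ, hℓd⟩ := Nat.exists_prime_and_dvd h
  have hℓn : ℓ ∣ n := hℓd.trans (Nat.gcd_dvd_left _ _)
  have hℓq : ℓ ∣ (p ^ k) ^ 2 - 1 := hℓd.trans (Nat.gcd_dvd_right _ _)
  have hn0 : n ≠ 0 := by
    rintro rfl
    rw [Nat.coprime_zero_left] at hgcd
    have h4 : 4 ≤ p ^ 2 := by nlinarith [hp.two_le]
    omega
  have hℓk : ℓ < k := lt_of_le_of_lt (Nat.le_of_dvd (Nat.pos_of_ne_zero hn0) hℓn) hnk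
  have hQ1 : 1 ≤ (p ^ k) ^ 2 := Nat.one_le_pow _ _ (Nat.pow_pos hp.pos)
  have hpQ : p ∣ (p ^ k) ^ 2 :=
    (dvd_pow_self p hk.pos.ne').trans (dvd_pow_self (p ^ k) two_ne_zero)
  have hℓp : ℓ ≠ p := by
    rintro rfl
    have h1 := Nat.dvd_sub hpQ hℓq
    rw [Nat.sub_sub_self hQ1, Nat.dvd_one] at h1
    have := hℓ.two_le
    omega
  haveI : Fact ℓ.Prime := ⟨hℓ⟩
  have hcop : Nat.Coprime p ℓ := (Nat.coprime_primes hp hℓ).2 (Ne.symm hℓp)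
  set u : (ZMod ℓ)ˣ := ZMod.unitOfCoprime p hcop with hu
  have hu2k : u ^ (2 * k) = 1 := by
    have hpm1 : 1 ≤ p ^ (2 * k) := Nat.one_le_pow _ _ hp.pos
    have hm : ℓ ∣ p ^ (2 * k) - 1 := by
      rw [mul_comm, pow_mul]
      exact hℓq
    have h0 : ((p ^ (2 * k) - 1 : ℕ) : ZMod ℓ) = 0 := (ZMod.natCast_eq_zero_iff _ _).2 hm
    rw [Nat.cast_sub hpm1] at h0
    push_cast at h0
    have h1 : ((p : ZMod ℓ)) ^ (2 * k) = 1 := by linear_combination h0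
    refine Units.ext ?_
    rw [Units.val_pow_eq_pow_val, Units.val_one, hu, ZMod.coe_unitOfCoprime]
    exact h1
  have hordlt : orderOf u < k := by
    have h1 : orderOf u ∣ Fintype.card (ZMod ℓ)ˣ := orderOf_dvd_card
    rw [ZMod.card_units_eq_totient, Nat.totient_prime hℓ] at h1
    have h2 := Nat.le_of_dvd (by have := hℓ.two_le; omega) h1
    omega
  have hck : Nat.Coprime k (orderOf u) := by
    refine (Nat.Prime.coprime_iff_not_dvd hk).2 fun hd => ?_
    have := Nat.le_of_dvd (orderOf_pos u) hd
    omega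
  have hord2 : orderOf u ∣ 2 :=
    Nat.Coprime.dvd_of_dvd_mul_right (Nat.Coprime.symm hck) (orderOf_dvd_of_pow_eq_one hu2k)
  have hu2 : u ^ 2 = 1 := orderOf_dvd_iff_pow_eq_one.1 hord2
  have hfinal : ℓ ∣ p ^ 2 - 1 := by
    have h1 : ((p : ZMod ℓ)) ^ 2 = 1 := by
      have h2 := congrArg Units.val hu2
      rw [Units.val_pow_eq_pow_val, Units.val_one, hu, ZMod.coe_unitOfCoprime] at h2
      exact h2
    have h2 : ((p ^ 2 - 1 : ℕ) : ZMod ℓ) = 0 := by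
      rw [Nat.cast_sub (Nat.one_le_pow _ _ hp.pos)]
      push_cast
      rw [h1, sub_self]
    exact (ZMod.natCast_eq_zero_iff _ _).1 h2
  have hdvd1 : ℓ ∣ 1 := hgcd ▸ Nat.dvd_gcd hℓn hfinal
  rw [Nat.dvd_one] at hdvd1
  exact hℓ.one_lt.ne' hdvd1

/-- Dickson's criterion: for `p` prime and `a ∈ F_p` nonzero, `D_n(x,a)` induces a
bijection on `F_{p^k}` for infinitely many `k` if and only if `gcd(n, p² - 1) = 1`. -/
theorem stmt_12 (p n : ℕ) [Fact p.Prime] (a : ZMod p) (ha : a ≠ 0) :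
    {k : ℕ | 0 < k ∧ Function.Bijective (fun c : GaloisField p k =>
        Polynomial.eval c ((Polynomial.dickson 1 a n).map
          (algebraMap (ZMod p) (GaloisField p k))))}.Infinite
      ↔ Nat.Coprime n (p ^ 2 - 1) := by
  classical
  have hp : p.Prime := Fact.out
  constructor
  · intro hinf
    by_contra hnc
    obtain ⟨ℓ, hℓ, hℓd⟩ := Nat.exists_prime_and_dvd hnc
    have hℓn : ℓ ∣ n := hℓd.trans (Nat.gcd_dvd_left _ _)
    have hℓp2 : ℓ ∣ p ^ 2 - 1 := hℓd.trans (Nat.gcd_dvd_right _ _)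
    obtain ⟨k, hk0, hbij⟩ := hinf.nonempty
    haveI : Fintype (GaloisField p k) := Fintype.ofFinite _
    have hcard : Fintype.card (GaloisField p k) = p ^ k := by
      rw [← Nat.card_eq_fintype_card]
      exact GaloisField.card p k hk0.ne'
    set a' := algebraMap (ZMod p) (GaloisField p k) a with ha'def
    have ha' : a' ≠ 0 := fun h => ha ((algebraMap (ZMod p) (GaloisField p k)).injective (by rw [← ha'def, h, map_zero]))
    have hdvd : ℓ ∣ Fintype.card (GaloisField p k) ^ 2 - 1 := by
      rw [hcard]
      refine hℓp2.trans ?_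
      have h1 := Nat.sub_dvd_pow_sub_pow (p ^ 2) 1 k
      rw [one_pow, ← pow_mul, mul_comm 2 k, pow_mul] at h1
      exact h1
    have heqfun : (fun c : GaloisField p k => eval c ((dickson 1 a n).map
        (algebraMap (ZMod p) (GaloisField p k)))) = fun c => (dickson 1 a' n).eval c := by
      funext c
      rw [map_dickson]
    rw [heqfun] at hbij
    exact aux_dickson_not_injective (GaloisField p k) a' ha' n ℓ hℓ hℓn hdvd hbij.injective
  · intro hgcd
    have hsub : {k : ℕ | k.Prime ∧ n < k} ⊆ {k : ℕ | 0 < k ∧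
        Function.Bijective (fun c : GaloisField p k =>
        Polynomial.eval c ((Polynomial.dickson 1 a n).map
          (algebraMap (ZMod p) (GaloisField p k))))} := by
      rintro k ⟨hk, hnk⟩
      refine ⟨hk.pos, ?_⟩
      haveI : Fintype (GaloisField p k) := Fintype.ofFinite _
      have hcard : Fintype.card (GaloisField p k) = p ^ k := by
        rw [← Nat.card_eq_fintype_card]
        exact GaloisField.card p k hk.pos.ne'
      set a' := algebraMap (ZMod p) (GaloisField p k) a with ha'def
      have ha' : a' ≠ 0 := fun h => ha ((algebraMap (ZMod p) (GaloisField p k)).injective (by rw [← ha'def, h, map_zero]))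
      have hinj := aux_dickson_injective (GaloisField p k) a' ha' n
        (by rw [hcard]; exact aux_gcd_pow p n k hp hgcd hk hnk)
      have hbij := (Finite.injective_iff_bijective).1 hinj
      have heqfun : (fun c : GaloisField p k => eval c ((dickson 1 a n).map
          (algebraMap (ZMod p) (GaloisField p k)))) = fun c => (dickson 1 a' n).eval c := by
        funext c
        rw [map_dickson]
      rw [heqfun]
      exact hbij
    refine Set.Infinite.mono hsub ?_
    have heq : {k : ℕ | k.Prime ∧ n < k} = {k : ℕ | k.Prime} \ {k : ℕ | k ≤ n} := by
      ext k
      simp only [Set.mem_setOf_eq, Set.mem_diff, not_le]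
    rw [heq]
    exact Nat.infinite_setOf_prime.diff (Set.finite_le_nat n)
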